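/- arXiv:2509.02889 — 2 statements merged into one kernel-verified Lean document; each statement's English description precedes it below -/
import Mathlib

section
/- Let K be a characteristic zero field with a gt-henselian field topology τ, and let I be a set of derivations K → K such that the topology τ_I is not discrete. Then τ_I is gt-henselian. -/
open TopologicalSpace Polynomial Filter Topology

variable {K : Type*}

/-- The topology on `K` induced by the embedding `a ↦ (a, (d a)_{d ∈ I})` into `K × K^I`,
where `K × K^I` carries the product topology induced by `τ`. -/
def derTop [Field K] (τ : TopologicalSpace K) (I : Set (Derivation ℤ K K)) :
    TopologicalSpace K :=
  @TopologicalSpace.induced K (K × (I → K)) (fun a => (a, fun d => d.1 a))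
    (@instTopologicalSpaceProd K (I → K) τ (@Pi.topologicalSpace I (fun _ => K) fun _ => τ))

/-- `τ` is a (Hausdorff) field topology on `K`. -/
def IsFieldTopology [Field K] (τ : TopologicalSpace K) : Prop :=
  @T2Space K τ ∧ @IsTopologicalRing K τ _ ∧
    @ContinuousOn K K τ τ (fun x => x⁻¹) {0}ᶜ

/-- `τ` is a gt-henselian topology on `K`. -/
def IsGtHenselian [Field K] (τ : TopologicalSpace K) : Prop :=
  IsFieldTopology τ ∧ τ ≠ ⊥ ∧
    ∀ U ∈ @nhds K τ (-1), ∀ d : ℕ, ∃ V ∈ @nhds K τ 0,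
      ∀ a : Fin (d + 1) → K, (∀ i, a i ∈ V) →
        ∃ β ∈ U,
          (X ^ (d + 2) + X ^ (d + 1) + ∑ i : Fin (d + 1), C (a i) * X ^ (i : ℕ)).eval β = 0 ∧
          (Polynomial.derivative
            (X ^ (d + 2) + X ^ (d + 1) + ∑ i : Fin (d + 1), C (a i) * X ^ (i : ℕ))).eval β ≠ 0

private lemma evalP [Field K] (d : ℕ) (a : Fin (d+1) → K) (β : K) :
    (X ^ (d + 2) + X ^ (d + 1) + ∑ i : Fin (d + 1), C (a i) * X ^ (i : ℕ)).eval β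
      = β ^ (d+2) + β ^ (d+1) + ∑ i : Fin (d+1), a i * β ^ (i:ℕ) := by
  simp [eval_finset_sum]

private lemma evalDP [Field K] (d : ℕ) (a : Fin (d+1) → K) (β : K) :
    (derivative (X ^ (d + 2) + X ^ (d + 1) + ∑ i : Fin (d + 1), C (a i) * X ^ (i : ℕ))).eval β
      = ((d+2 : ℕ) : K) * β ^ (d+1) + ((d+1 : ℕ) : K) * β ^ d
        + ∑ i : Fin (d+1), a i * ((i:ℕ) : K) * β ^ ((i:ℕ) - 1) := by
  have e1 : d + 2 - 1 = d + 1 := rfl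
  have e2 : d + 1 - 1 = d := rfl
  simp [derivative_add, derivative_sum, derivative_C_mul_X_pow, derivative_X_pow, eval_finset_sum, e1, e2, mul_assoc]
  left; ring

private lemma der_root [Field K] (δ : Derivation ℤ K K) {d : ℕ} {a : Fin (d+1) → K} {β : K}
    (h0 : (X ^ (d + 2) + X ^ (d + 1) + ∑ i : Fin (d + 1), C (a i) * X ^ (i : ℕ)).eval β = 0)
    (h1 : (derivative (X ^ (d + 2) + X ^ (d + 1) +
        ∑ i : Fin (d + 1), C (a i) * X ^ (i : ℕ))).eval β ≠ 0) :
    δ β = -(∑ i : Fin (d+1), δ (a i) * β ^ (i:ℕ))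
      * ((derivative (X ^ (d + 2) + X ^ (d + 1) +
          ∑ i : Fin (d + 1), C (a i) * X ^ (i : ℕ))).eval β)⁻¹ := by
  have h0' : β ^ (d+2) + β ^ (d+1) + ∑ i : Fin (d+1), a i * β ^ (i:ℕ) = 0 := by
    rw [← evalP]; exact h0
  have key : (derivative (X ^ (d + 2) + X ^ (d + 1) +
        ∑ i : Fin (d + 1), C (a i) * X ^ (i : ℕ))).eval β * δ β
      + ∑ i : Fin (d+1), δ (a i) * β ^ (i:ℕ) = 0 := by
    have h2 := congrArg δ h0'
    have e1 : d + 2 - 1 = d + 1 := rfl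
    have e2 : d + 1 - 1 = d := rfl
    simp only [map_add, map_sum, Derivation.leibniz, Derivation.leibniz_pow, map_zero,
      smul_eq_mul, nsmul_eq_mul, e1, e2] at h2
    rw [evalDP]
    rw [Finset.sum_add_distrib] at h2
    rw [add_mul, add_mul, Finset.sum_mul]
    have hs1 : ∑ i : Fin (d+1), a i * (↑(i:ℕ) * (β ^ ((i:ℕ)-1) * δ β))
        = ∑ i : Fin (d+1), a i * ↑(i:ℕ) * β ^ ((i:ℕ)-1) * δ β :=
      Finset.sum_congr rfl fun i _ => by ring
    have hs2 : ∑ i : Fin (d+1), β ^ (i:ℕ) * δ (a i)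
        = ∑ i : Fin (d+1), δ (a i) * β ^ (i:ℕ) :=
      Finset.sum_congr rfl fun i _ => mul_comm _ _
    rw [hs1, hs2] at h2
    linear_combination h2
  rw [eq_mul_inv_iff_mul_eq₀ h1]
  linear_combination key

private lemma derTop_eq [Field K] (τ : TopologicalSpace K) (I : Set (Derivation ℤ K K)) :
    derTop τ I = τ ⊓ ⨅ δ : I, τ.induced (fun a => δ.1 a) := by
  show TopologicalSpace.induced (fun a : K => (a, fun d : I => d.1 a))
      (TopologicalSpace.induced Prod.fst τ ⊓ TopologicalSpace.induced Prod.snd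
        (⨅ δ : I, TopologicalSpace.induced (fun f : I → K => f δ) τ)) = _
  simp only [induced_inf, induced_compose, induced_iInf]
  have h1 : (Prod.fst ∘ fun a : K => (a, fun d : I => d.1 a)) = id := rfl
  rw [h1, induced_id]
  exact congrArg _ (iInf_congr fun δ => rfl)

private lemma nhds_derTop [Field K] (τ : TopologicalSpace K) (I : Set (Derivation ℤ K K))
    (x : K) :
    @nhds K (derTop τ I) x
      = @nhds K τ x ⊓ ⨅ δ : I, Filter.comap (fun a => δ.1 a) (@nhds K τ (δ.1 x)) := by
  rw [derTop_eq, _root_.nhds_inf, _root_.nhds_iInf]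
  exact congrArg _ (iInf_congr fun δ => nhds_induced _ _)

private lemma nhds_derTop_le [Field K] (τ : TopologicalSpace K) (I : Set (Derivation ℤ K K))
    (x : K) : @nhds K (derTop τ I) x ≤ @nhds K τ x := by
  rw [nhds_derTop]; exact inf_le_left

private lemma tendsto_der [Field K] (τ : TopologicalSpace K) (I : Set (Derivation ℤ K K))
    (δ : I) (x : K) :
    Tendsto (fun a => δ.1 a) (@nhds K (derTop τ I) x) (@nhds K τ (δ.1 x)) := by
  rw [nhds_derTop, Filter.tendsto_iff_comap]
  exact le_trans inf_le_right (iInf_le _ δ)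

private lemma tendsto_derTop_rng [Field K] {τ : TopologicalSpace K}
    {I : Set (Derivation ℤ K K)} {α : Type*} {l : Filter α} {f : α → K} {x : K}
    (h0 : Tendsto f l (@nhds K τ x))
    (h : ∀ δ : I, Tendsto (fun a => δ.1 (f a)) l (@nhds K τ (δ.1 x))) :
    Tendsto f l (@nhds K (derTop τ I) x) := by
  rw [nhds_derTop, tendsto_inf, tendsto_iInf]
  exact ⟨h0, fun δ => tendsto_comap_iff.mpr (h δ)⟩

theorem stmt4 [Field K] [CharZero K] (τ : TopologicalSpace K)
    (hτ : IsGtHenselian τ) (I : Set (Derivation ℤ K K))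
    (hnd : derTop τ I ≠ ⊥) :
    IsGtHenselian (derTop τ I) := by
  obtain ⟨⟨ht2, hring, hinv⟩, -, hens⟩ := hτ
  letI := τ
  haveI : T2Space K := ht2
  haveI : IsTopologicalRing K := hring
  have hle := nhds_derTop_le τ I
  have hder := tendsto_der τ I
  refine ⟨⟨?_, ?_, ?_⟩, hnd, ?_⟩
  · -- T2
    refine (@t2Space_iff_disjoint_nhds K (derTop τ I)).mpr fun x y hxy => ?_
    exact (t2Space_iff_disjoint_nhds.mp ht2 hxy).mono (hle x) (hle y)
  · -- TopologicalRing
    have hadd : @Continuous (K × K) K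
        (@instTopologicalSpaceProd K K (derTop τ I) (derTop τ I)) (derTop τ I)
        (fun p => p.1 + p.2) := by
      refine (@continuous_iff_continuousAt (K × K) K
        (@instTopologicalSpaceProd K K (derTop τ I) (derTop τ I)) (derTop τ I) _).mpr ?_
      rintro ⟨x, y⟩
      show Tendsto _ _ _
      rw [@nhds_prod_eq K K (derTop τ I) (derTop τ I)]
      refine tendsto_derTop_rng ?_ fun δ => ?_
      · exact (tendsto_fst.mono_right (hle x)).add (tendsto_snd.mono_right (hle y))
      · have h1 : Tendsto (fun p : K × K => δ.1 p.1)
            (@nhds K (derTop τ I) x ×ˢ @nhds K (derTop τ I) y) (𝓝 (δ.1 x)) :=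
          (hder δ x).comp tendsto_fst
        have h2 : Tendsto (fun p : K × K => δ.1 p.2)
            (@nhds K (derTop τ I) x ×ˢ @nhds K (derTop τ I) y) (𝓝 (δ.1 y)) :=
          (hder δ y).comp tendsto_snd
        simpa [map_add] using h1.add h2
    have hmul : @Continuous (K × K) K
        (@instTopologicalSpaceProd K K (derTop τ I) (derTop τ I)) (derTop τ I)
        (fun p => p.1 * p.2) := by
      refine (@continuous_iff_continuousAt (K × K) K
        (@instTopologicalSpaceProd K K (derTop τ I) (derTop τ I)) (derTop τ I) _).mpr ?_
      rintro ⟨x, y⟩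
      show Tendsto _ _ _
      rw [@nhds_prod_eq K K (derTop τ I) (derTop τ I)]
      refine tendsto_derTop_rng ?_ fun δ => ?_
      · exact (tendsto_fst.mono_right (hle x)).mul (tendsto_snd.mono_right (hle y))
      · have h1 : Tendsto (fun p : K × K => p.1 * δ.1 p.2)
            (@nhds K (derTop τ I) x ×ˢ @nhds K (derTop τ I) y) (𝓝 (x * δ.1 y)) :=
          (tendsto_fst.mono_right (hle x)).mul ((hder δ y).comp tendsto_snd)
        have h2 : Tendsto (fun p : K × K => p.2 * δ.1 p.1)
            (@nhds K (derTop τ I) x ×ˢ @nhds K (derTop τ I) y) (𝓝 (y * δ.1 x)) :=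
          (tendsto_snd.mono_right (hle y)).mul ((hder δ x).comp tendsto_fst)
        simpa [Derivation.leibniz, smul_eq_mul] using h1.add h2
    have hneg : @Continuous K K (derTop τ I) (derTop τ I) (fun x => -x) := by
      refine (@continuous_iff_continuousAt K K (derTop τ I) (derTop τ I) _).mpr fun x => ?_
      show Tendsto _ _ _
      refine tendsto_derTop_rng ?_ fun δ => ?_
      · exact (tendsto_id.mono_right (hle x)).neg
      · simpa [map_neg] using (hder δ x).neg
    exact @IsTopologicalRing.mk K (derTop τ I) _
      (@IsTopologicalSemiring.mk K (derTop τ I) _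
        (@ContinuousAdd.mk K (derTop τ I) _ hadd)
        (@ContinuousMul.mk K (derTop τ I) _ hmul))
      (@ContinuousNeg.mk K (derTop τ I) _ hneg)
  · -- inversion
    intro x hx
    have hx0 : x ≠ 0 := hx
    have hWle : @nhdsWithin K (derTop τ I) x {0}ᶜ ≤ @nhdsWithin K τ x {0}ᶜ :=
      inf_le_inf_right _ (hle x)
    have hτx : Tendsto (fun y : K => y⁻¹) (@nhdsWithin K τ x {0}ᶜ) (𝓝 x⁻¹) := hinv x hx
    have h0 : Tendsto (fun y : K => y⁻¹) (@nhdsWithin K (derTop τ I) x {0}ᶜ) (𝓝 x⁻¹) :=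
      hτx.mono_left hWle
    show Tendsto _ _ _
    refine tendsto_derTop_rng h0 fun δ => ?_
    have hdx : Tendsto (fun y : K => δ.1 y) (@nhdsWithin K (derTop τ I) x {0}ᶜ)
        (𝓝 (δ.1 x)) := (hder δ x).mono_left inf_le_left
    simpa [Derivation.leibniz_inv, smul_eq_mul] using ((h0.pow 2).neg.mul hdx)
  · -- gt-henselian condition
    intro U hU d
    rw [nhds_derTop] at hU
    rcases Filter.mem_inf_iff.mp hU with ⟨U₀, hU₀, Uc, hUc, rfl⟩
    rcases Filter.mem_iInf.mp hUc with ⟨J, hJfin, Vc, hVc, rfl⟩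
    haveI : Finite J := hJfin.to_subtype
    choose W hW hWV using fun j : J => Filter.mem_comap.mp (hVc j)
    have hδm1 : ∀ j : J, (j.1.1 : Derivation ℤ K K) (-1 : K) = 0 := fun j => by
      rw [map_neg, Derivation.map_one_eq_zero, neg_zero]
    have hWnhds : ∀ j : J, W j ∈ 𝓝 (0 : K) := fun j => hδm1 j ▸ hW j
    have hU₁ : (⋂ j : J, W j) ∈ 𝓝 (0 : K) := Filter.iInter_mem.mpr hWnhds
    set U₁ := ⋂ j : J, W j with hU₁def
    -- the limit of the derivative evaluation
    set c : K := ((d+2 : ℕ) : K) * (-1)^(d+1) + ((d+1 : ℕ) : K) * (-1)^d with hcdef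
    have hc : c ≠ 0 := by
      have : c = -(-1 : K)^d := by rw [hcdef]; push_cast; ring
      rw [this]
      exact neg_ne_zero.mpr (pow_ne_zero _ (by norm_num))
    -- the implicit-derivative function and its continuity
    set L : Filter ((Fin (d+1) → K) × ((Fin (d+1) → K) × K)) :=
      (Filter.pi fun _ : Fin (d+1) => 𝓝 (0:K)) ×ˢ
        ((Filter.pi fun _ : Fin (d+1) => 𝓝 (0:K)) ×ˢ 𝓝 (-1 : K)) with hLdef
    have tβ : Tendsto (fun q : (Fin (d+1) → K) × ((Fin (d+1) → K) × K) => q.2.2) L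
        (𝓝 (-1 : K)) := tendsto_snd.comp tendsto_snd
    have ta : ∀ i, Tendsto (fun q : (Fin (d+1) → K) × ((Fin (d+1) → K) × K) => q.1 i) L
        (𝓝 (0 : K)) := fun i => (Filter.tendsto_eval_pi _ i).comp tendsto_fst
    have tb : ∀ i, Tendsto (fun q : (Fin (d+1) → K) × ((Fin (d+1) → K) × K) => q.2.1 i) L
        (𝓝 (0 : K)) := fun i => (Filter.tendsto_eval_pi _ i).comp (tendsto_fst.comp tendsto_snd)
    have tnum : Tendsto (fun q : (Fin (d+1) → K) × ((Fin (d+1) → K) × K) =>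
        -(∑ i : Fin (d+1), q.2.1 i * q.2.2 ^ (i:ℕ))) L (𝓝 (0 : K)) := by
      have hterm : ∀ i : Fin (d+1), Tendsto
          (fun q : (Fin (d+1) → K) × ((Fin (d+1) → K) × K) => q.2.1 i * q.2.2 ^ (i:ℕ)) L
          (𝓝 (0 : K)) := fun i => by
        have := (tb i).mul (tβ.pow (i:ℕ)); rwa [zero_mul] at this
      have hsum := tendsto_finset_sum Finset.univ (fun i (_ : i ∈ Finset.univ) => hterm i)
      rw [Finset.sum_const_zero] at hsum
      have := hsum.neg; rwa [neg_zero] at this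
    have tden : Tendsto (fun q : (Fin (d+1) → K) × ((Fin (d+1) → K) × K) =>
        (derivative (X ^ (d + 2) + X ^ (d + 1) +
          ∑ i : Fin (d + 1), C (q.1 i) * X ^ (i : ℕ))).eval q.2.2) L (𝓝 c) := by
      have t1 : Tendsto (fun q : (Fin (d+1) → K) × ((Fin (d+1) → K) × K) =>
          ((d+2 : ℕ) : K) * q.2.2 ^ (d+1)) L (𝓝 (((d+2 : ℕ) : K) * (-1)^(d+1))) :=
        tendsto_const_nhds.mul (tβ.pow _)
      have t2 : Tendsto (fun q : (Fin (d+1) → K) × ((Fin (d+1) → K) × K) =>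
          ((d+1 : ℕ) : K) * q.2.2 ^ d) L (𝓝 (((d+1 : ℕ) : K) * (-1)^d)) :=
        tendsto_const_nhds.mul (tβ.pow _)
      have t3 : Tendsto (fun q : (Fin (d+1) → K) × ((Fin (d+1) → K) × K) =>
          ∑ i : Fin (d+1), q.1 i * ((i:ℕ) : K) * q.2.2 ^ ((i:ℕ) - 1)) L (𝓝 (0 : K)) := by
        have hterm : ∀ i : Fin (d+1), Tendsto
            (fun q : (Fin (d+1) → K) × ((Fin (d+1) → K) × K) =>
              q.1 i * ((i:ℕ) : K) * q.2.2 ^ ((i:ℕ) - 1)) L (𝓝 (0 : K)) := fun i => by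
          have := ((ta i).mul (tendsto_const_nhds (x := ((i:ℕ) : K)))).mul
            (tβ.pow ((i:ℕ) - 1))
          rwa [zero_mul, zero_mul] at this
        have hsum := tendsto_finset_sum Finset.univ (fun i (_ : i ∈ Finset.univ) => hterm i)
        rwa [Finset.sum_const_zero] at hsum
      have tden0 := (t1.add t2).add t3
      rw [add_zero] at tden0
      exact (tden0.congr fun q => (evalDP d q.1 q.2.2).symm)
    have hcmem : ({0} : Set K)ᶜ ∈ 𝓝 c :=
      IsOpen.mem_nhds isOpen_compl_singleton (Set.mem_compl_singleton_iff.mpr hc)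
    have tinv : Tendsto (fun q : (Fin (d+1) → K) × ((Fin (d+1) → K) × K) =>
        ((derivative (X ^ (d + 2) + X ^ (d + 1) +
          ∑ i : Fin (d + 1), C (q.1 i) * X ^ (i : ℕ))).eval q.2.2)⁻¹) L (𝓝 c⁻¹) :=
      ((hinv.continuousAt hcmem).tendsto).comp tden
    have tG : Tendsto (fun q : (Fin (d+1) → K) × ((Fin (d+1) → K) × K) =>
        -(∑ i : Fin (d+1), q.2.1 i * q.2.2 ^ (i:ℕ)) *
          ((derivative (X ^ (d + 2) + X ^ (d + 1) +
            ∑ i : Fin (d + 1), C (q.1 i) * X ^ (i : ℕ))).eval q.2.2)⁻¹) L (𝓝 (0:K)) := by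
      have := tnum.mul tinv; rwa [zero_mul] at this
    have hGmem := tG hU₁
    rw [Filter.mem_map, hLdef] at hGmem
    rcases Filter.mem_prod_iff.mp hGmem with ⟨A, hA, B, hB, hAB⟩
    rcases Filter.mem_prod_iff.mp hB with ⟨A', hA', Uβ, hUβ, hA'B⟩
    rcases Filter.mem_pi'.mp hA with ⟨F₀, t₀, ht₀, hsub₀⟩
    rcases Filter.mem_pi'.mp hA' with ⟨F₁, t₁, ht₁, hsub₁⟩
    have hV₀ : (⋂ i, t₀ i) ∈ 𝓝 (0:K) := Filter.iInter_mem.mpr ht₀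
    have hV₁ : (⋂ i, t₁ i) ∈ 𝓝 (0:K) := Filter.iInter_mem.mpr ht₁
    set V₀ := ⋂ i, t₀ i
    set V₁ := ⋂ i, t₁ i
    obtain ⟨V₂, hV₂, hroot⟩ := hens (U₀ ∩ Uβ) (Filter.inter_mem hU₀ hUβ) d
    refine ⟨{a : K | a ∈ V₀ ∩ V₂ ∧ ∀ j : J, (j.1.1 : Derivation ℤ K K) a ∈ V₁}, ?_, ?_⟩
    · rw [nhds_derTop]
      have m1 : {a : K | a ∈ V₀ ∩ V₂} ∈
          @nhds K τ 0 ⊓ ⨅ δ : I, Filter.comap (fun a => δ.1 a) (@nhds K τ (δ.1 0)) :=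
        mem_inf_of_left (Filter.inter_mem hV₀ hV₂)
      have m2 : {a : K | ∀ j : J, (j.1.1 : Derivation ℤ K K) a ∈ V₁} ∈
          @nhds K τ 0 ⊓ ⨅ δ : I, Filter.comap (fun a => δ.1 a) (@nhds K τ (δ.1 0)) := by
        refine mem_inf_of_right ?_
        have heq : {a : K | ∀ j : J, (j.1.1 : Derivation ℤ K K) a ∈ V₁}
            = ⋂ j : J, (fun a : K => (j.1.1 : Derivation ℤ K K) a) ⁻¹' V₁ := by
          ext a; simp
        rw [heq]
        refine Filter.iInter_mem.mpr fun j => ?_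
        refine mem_iInf_of_mem j.1 (preimage_mem_comap ?_)
        have : (j.1.1 : Derivation ℤ K K) (0 : K) = 0 := map_zero _
        rw [this]
        exact hV₁
      exact Filter.inter_mem m1 m2
    · intro a ha
      obtain ⟨β, hβ, h0, h1⟩ := hroot a (fun i => (ha i).1.2)
      refine ⟨β, ⟨hβ.1, Set.mem_iInter.mpr fun j => ?_⟩, h0, h1⟩
      apply hWV j
      show (j.1.1 : Derivation ℤ K K) β ∈ W j
      rw [der_root (j.1.1 : Derivation ℤ K K) h0 h1]
      have hmemA : a ∈ A := by
        refine hsub₀ fun i _ => ?_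
        exact Set.iInter_subset t₀ i (ha i).1.1
      have hmemB : ((fun i => (j.1.1 : Derivation ℤ K K) (a i)), β) ∈ B := by
        refine hA'B ⟨?_, hβ.2⟩
        refine hsub₁ fun i _ => ?_
        exact Set.iInter_subset t₁ i ((ha i).2 j)
      have := hAB (Set.mk_mem_prod hmemA hmemB)
      exact Set.iInter_subset W j this
end

section
/- Let K be a field with a gt-henselian field topology τ, let d : K → K be a derivation whose constant subfield Cons(d) is τ-dense in K and d ≠ 0. Then the topology τ_d (induced by a ↦ (a, d(a))) is a gt-henselian topology strictly refining τ. -/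
open TopologicalSpace Polynomial

variable {K : Type*}

section Auxiliary

open Topology Filter

/-- `derTop τ {D}` is the infimum of `τ` and the pullback of `τ` along `D`. -/
theorem DerTopAux.derTop_eq [Field K] (τ : TopologicalSpace K) (D : Derivation ℤ K K) :
    derTop τ {D} = τ ⊓ TopologicalSpace.induced (⇑D) τ := by
  rw [derTop, instTopologicalSpaceProd, induced_inf, induced_compose, induced_compose]
  congr 1
  · exact induced_id
  · rw [Pi.topologicalSpace, induced_iInf]
    haveI : Unique ({D} : Set (Derivation ℤ K K)) := Set.uniqueSingleton D
    rw [iInf_unique, induced_compose]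
    have hD : ((default : ({D} : Set (Derivation ℤ K K))) : Derivation ℤ K K) = D :=
      (default : ({D} : Set (Derivation ℤ K K))).2
    congr 1
    funext a
    simp [hD]

/-- the ring hom `a ↦ a + ε D a` into the dual numbers. -/
def DerTopAux.derHom [Field K] (D : Derivation ℤ K K) : K →+* TrivSqZeroExt K K where
  toFun a := (a, D a)
  map_one' := by ext <;> simp
  map_mul' a b := by
    ext
    · rfl
    · show D (a * b) = _
      rw [D.leibniz]
      show _ = a • D b + MulOpposite.op b • D a
      simp [smul_eq_mul, mul_comm]
  map_zero' := by ext <;> simp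
  map_add' a b := by ext <;> simp <;> rfl

theorem DerTopAux.derHom_induced [Field K] (τ : TopologicalSpace K) (D : Derivation ℤ K K) :
    @TopologicalSpace.induced K (TrivSqZeroExt K K) (DerTopAux.derHom D)
      (@TrivSqZeroExt.instTopologicalSpace K K τ τ) = τ ⊓ TopologicalSpace.induced (⇑D) τ := by
  rw [TrivSqZeroExt.instTopologicalSpace, induced_inf, induced_compose, induced_compose]
  congr 1
  exact induced_id

theorem DerTopAux.ring_sigma [Field K] (τ : TopologicalSpace K) (hr : @IsTopologicalRing K τ _)
    (D : Derivation ℤ K K) :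
    @IsTopologicalRing K (τ ⊓ TopologicalSpace.induced (⇑D) τ) _ := by
  set σ := τ ⊓ TopologicalSpace.induced (⇑D) τ with hσ
  set tE := @TrivSqZeroExt.instTopologicalSpace K K τ τ with htE
  have hrE : @IsTopologicalRing (TrivSqZeroExt K K) tE _ := by letI := τ; infer_instance
  have hInd : @Topology.IsInducing K (TrivSqZeroExt K K) σ tE (DerTopAux.derHom D) :=
    @Topology.IsInducing.mk _ _ σ tE _ (DerTopAux.derHom_induced τ D).symm
  have hag : @IsTopologicalAddGroup K σ _ :=
    @Topology.IsInducing.topologicalAddGroup (TrivSqZeroExt K K) K tE _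
      (@IsTopologicalRing.to_topologicalAddGroup _ _ tE hrE) (K →+* TrivSqZeroExt K K) _ σ _ _
      (DerTopAux.derHom D) hInd
  have hm : @ContinuousMul K σ _ :=
    @Topology.IsInducing.continuousMul K (TrivSqZeroExt K K) (K →+* TrivSqZeroExt K K) _ _ _ _ σ tE
      (@IsTopologicalSemiring.toContinuousMul _ tE _
        (@IsTopologicalRing.toIsTopologicalSemiring _ tE _ hrE)) (DerTopAux.derHom D) hInd
  exact @IsTopologicalRing.mk K σ _
    (@IsTopologicalSemiring.mk K σ _ (@IsTopologicalAddGroup.toContinuousAdd K σ _ hag) hm)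
    (@IsTopologicalAddGroup.toContinuousNeg K σ _ hag)

theorem DerTopAux.nhds_sigma [Field K] (τ : TopologicalSpace K) (D : Derivation ℤ K K) (x : K) :
    @nhds K (τ ⊓ TopologicalSpace.induced (⇑D) τ) x
      = @nhds K τ x ⊓ Filter.comap (⇑D) (@nhds K τ (D x)) := by
  rw [_root_.nhds_inf, nhds_induced]

theorem DerTopAux.inv_sigma [Field K] (τ : TopologicalSpace K)
    (hr : @IsTopologicalRing K τ _) (hinv : @ContinuousOn K K τ τ (fun x => x⁻¹) {0}ᶜ)
    (D : Derivation ℤ K K) :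
    @ContinuousOn K K (τ ⊓ TopologicalSpace.induced (⇑D) τ)
      (τ ⊓ TopologicalSpace.induced (⇑D) τ) (fun x => x⁻¹) {0}ᶜ := by
  letI := τ
  intro x hx
  have hx0 : x ≠ 0 := hx
  have e1 : @nhdsWithin K (τ ⊓ TopologicalSpace.induced (⇑D) τ) x {0}ᶜ
      = (𝓝 x ⊓ comap (⇑D) (𝓝 (D x))) ⊓ 𝓟 {0}ᶜ := by
    show @nhds K (τ ⊓ TopologicalSpace.induced (⇑D) τ) x ⊓ 𝓟 {0}ᶜ = _
    rw [DerTopAux.nhds_sigma]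
  show Filter.Tendsto (fun y : K => y⁻¹)
    (@nhdsWithin K (τ ⊓ TopologicalSpace.induced (⇑D) τ) x {0}ᶜ)
    (@nhds K (τ ⊓ TopologicalSpace.induced (⇑D) τ) x⁻¹)
  rw [e1, DerTopAux.nhds_sigma]
  have hle1 : (𝓝 x ⊓ comap (⇑D) (𝓝 (D x))) ⊓ 𝓟 {0}ᶜ ≤ 𝓝 x ⊓ 𝓟 ({0}ᶜ : Set K) :=
    inf_le_inf_right _ inf_le_left
  have hle2 : (𝓝 x ⊓ comap (⇑D) (𝓝 (D x))) ⊓ 𝓟 {0}ᶜ ≤ comap (⇑D) (𝓝 (D x)) :=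
    le_trans inf_le_left inf_le_right
  have h1 : Tendsto (fun y : K => y⁻¹) ((𝓝 x ⊓ comap (⇑D) (𝓝 (D x))) ⊓ 𝓟 {0}ᶜ) (𝓝 x⁻¹) :=
    (hinv x hx).mono_left hle1
  refine tendsto_inf.mpr ⟨h1, ?_⟩
  rw [tendsto_comap_iff]
  have hD : Tendsto (⇑D) ((𝓝 x ⊓ comap (⇑D) (𝓝 (D x))) ⊓ 𝓟 {0}ᶜ) (𝓝 (D x)) :=
    tendsto_comap.mono_left hle2
  have h2 : Tendsto (fun y : K => -(y⁻¹ * y⁻¹) * D y)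
      ((𝓝 x ⊓ comap (⇑D) (𝓝 (D x))) ⊓ 𝓟 {0}ᶜ) (𝓝 (D x⁻¹)) := by
    have hDx : D x⁻¹ = -(x⁻¹ * x⁻¹) * D x := by
      rw [D.leibniz_inv, smul_eq_mul]; ring_nf
    rw [hDx]
    exact ((h1.mul h1).neg).mul hD
  refine h2.congr' ?_
  have hmem : {0}ᶜ ∈ (𝓝 x ⊓ comap (⇑D) (𝓝 (D x))) ⊓ 𝓟 ({0}ᶜ : Set K) :=
    mem_inf_of_right (mem_principal_self _)
  filter_upwards [hmem] with y hy
  have hy0 : y ≠ 0 := hy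
  show -(y⁻¹ * y⁻¹) * D y = D y⁻¹
  rw [D.leibniz_inv, smul_eq_mul]; ring_nf

/-- The monic polynomial under consideration. -/
noncomputable def DerTopAux.P [Field K] (n : ℕ) (a : Fin (n+1) → K) : K[X] :=
  X ^ (n + 2) + X ^ (n + 1) + ∑ i : Fin (n + 1), C (a i) * X ^ (i : ℕ)

theorem DerTopAux.comp2 [Field K] (n : ℕ) (a : Fin (n+1) → K) (β : K) :
    (derivative (DerTopAux.P n a)).eval β
      = ((n:K)+2) * β ^ (n+1) + ((n:K)+1) * β ^ n
        + ∑ i : Fin (n+1), a i * (((i:ℕ):K) * β ^ ((i:ℕ)-1)) := by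
  simp only [DerTopAux.P, derivative_add, derivative_X_pow, derivative_sum, derivative_C_mul,
    eval_add, eval_mul, eval_pow, eval_X, eval_C, eval_finset_sum, eval_natCast]
  push_cast
  ring_nf

theorem DerTopAux.comp3 [Field K] (n : ℕ) (D : Derivation ℤ K K) (a : Fin (n+1) → K) (β : K)
    (hroot : (DerTopAux.P n a).eval β = 0) :
    D β * (derivative (DerTopAux.P n a)).eval β = -∑ i : Fin (n+1), β ^ (i:ℕ) * D (a i) := by
  have h := D.apply_eval_eq β (DerTopAux.P n a)
  rw [hroot, map_zero] at h
  have hmc : PolynomialModule.eval β (D.mapCoeffs (DerTopAux.P n a))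
      = ∑ i : Fin (n+1), β ^ (i:ℕ) * D (a i) := by
    simp only [DerTopAux.P, map_add, map_sum, X_pow_eq_monomial, C_mul_X_pow_eq_monomial,
      Derivation.mapCoeffs_monomial, Derivation.map_one_eq_zero]
    simp [PolynomialModule.eval_single, smul_eq_mul]
  rw [hmc] at h
  have h2 := h.symm
  rw [smul_eq_mul] at h2
  linear_combination h2

theorem DerTopAux.pi_mem [Field K] (τ : TopologicalSpace K) {m : ℕ} {x : K} {s : Set (Fin m → K)}
    (hs : s ∈ @nhds (Fin m → K) (@Pi.topologicalSpace (Fin m) (fun _ => K) fun _ => τ)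
      (fun _ => x)) :
    ∃ V ∈ @nhds K τ x, ∀ a : Fin m → K, (∀ i, a i ∈ V) → a ∈ s := by
  letI := τ
  rw [nhds_pi, Filter.mem_pi] at hs
  obtain ⟨I, hIfin, t, ht, hsub⟩ := hs
  refine ⟨⋂ i, t i, Filter.iInter_mem.mpr ht, fun a ha => hsub fun i _ => ?_⟩
  exact Set.mem_iInter.mp (ha i) i

theorem DerTopAux.denom_ne [Field K] [CharZero K] (n : ℕ) :
    ((n:K)+2) * (-1:K) ^ (n+1) + ((n:K)+1) * (-1:K) ^ n
      + ∑ i : Fin (n+1), (0:K) * (((i:ℕ):K) * (-1:K) ^ ((i:ℕ)-1)) ≠ 0 := by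
  have h : ((n:K)+2) * (-1:K) ^ (n+1) + ((n:K)+1) * (-1:K) ^ n
      + ∑ i : Fin (n+1), (0:K) * (((i:ℕ):K) * (-1:K) ^ ((i:ℕ)-1)) = -(-1:K) ^ n := by
    rw [pow_succ]
    simp
    ring
  rw [h]
  exact neg_ne_zero.mpr (pow_ne_zero _ (neg_ne_zero.mpr one_ne_zero))

theorem DerTopAux.extract [Field K] [CharZero K] (τ : TopologicalSpace K)
    (ht2 : @T2Space K τ) (hr : @IsTopologicalRing K τ _)
    (hinv : @ContinuousOn K K τ τ (fun x => x⁻¹) {0}ᶜ) (n : ℕ) {U₂ : Set K}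
    (hU₂ : U₂ ∈ @nhds K τ 0) :
    ∃ W₁ ∈ @nhds K τ 0, ∃ W₂ ∈ @nhds K τ 0, ∃ W₃ ∈ @nhds K τ (-1),
      ∀ (a b : Fin (n+1) → K) (β : K), (∀ i, a i ∈ W₁) → (∀ i, b i ∈ W₂) → β ∈ W₃ →
        (-(∑ i : Fin (n+1), β ^ (i:ℕ) * b i)) *
          ((derivative (DerTopAux.P n a)).eval β)⁻¹ ∈ U₂ := by
  letI := τ
  set G : (Fin (n+1) → K) × (Fin (n+1) → K) × K → K := fun p =>
    (-(∑ i : Fin (n+1), p.2.2 ^ (i:ℕ) * p.2.1 i)) *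
      ((derivative (DerTopAux.P n p.1)).eval p.2.2)⁻¹ with hG
  set x₀ : (Fin (n+1) → K) × (Fin (n+1) → K) × K := (0, 0, -1) with hx₀
  have hGeq : G = fun p =>
      (-(∑ i : Fin (n+1), p.2.2 ^ (i:ℕ) * p.2.1 i)) *
        (((n:K)+2) * p.2.2 ^ (n+1) + ((n:K)+1) * p.2.2 ^ n
          + ∑ i : Fin (n+1), p.1 i * (((i:ℕ):K) * p.2.2 ^ ((i:ℕ)-1)))⁻¹ := by
    funext p
    rw [hG]
    simp only []
    rw [DerTopAux.comp2]
  have hnum : Continuous fun p : (Fin (n+1) → K) × (Fin (n+1) → K) × K =>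
      -(∑ i : Fin (n+1), p.2.2 ^ (i:ℕ) * p.2.1 i) :=
    (continuous_finset_sum Finset.univ fun i _ =>
      ((continuous_snd.snd).pow _).mul ((continuous_apply i).comp continuous_snd.fst)).neg
  have hden : Continuous fun p : (Fin (n+1) → K) × (Fin (n+1) → K) × K =>
      ((n:K)+2) * p.2.2 ^ (n+1) + ((n:K)+1) * p.2.2 ^ n
        + ∑ i : Fin (n+1), p.1 i * (((i:ℕ):K) * p.2.2 ^ ((i:ℕ)-1)) := by
    refine ((continuous_const.mul ((continuous_snd.snd).pow _)).add
      (continuous_const.mul ((continuous_snd.snd).pow _))).add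
      (continuous_finset_sum Finset.univ fun i _ =>
        ((continuous_apply i).comp continuous_fst).mul
          (continuous_const.mul ((continuous_snd.snd).pow _)))
  have hden0 : (((n:K)+2) * (x₀.2.2 : K) ^ (n+1) + ((n:K)+1) * x₀.2.2 ^ n
      + ∑ i : Fin (n+1), x₀.1 i * (((i:ℕ):K) * x₀.2.2 ^ ((i:ℕ)-1))) ≠ 0 := by
    rw [hx₀]
    exact DerTopAux.denom_ne n
  have hcont : ContinuousAt G x₀ := by
    rw [hGeq]
    exact ContinuousAt.mul hnum.continuousAt
      (ContinuousAt.comp (g := fun x : K => x⁻¹)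
        (hinv.continuousAt (IsOpen.mem_nhds isOpen_compl_singleton hden0))
        hden.continuousAt)
  have hG0 : G x₀ = 0 := by
    rw [hG, hx₀]
    simp
  have hS : G ⁻¹' U₂ ∈ 𝓝 x₀ := hcont (by rw [hG0]; exact hU₂)
  rw [nhds_prod_eq, nhds_prod_eq, Filter.mem_prod_iff] at hS
  obtain ⟨A, hA, BC, hBC, hsub⟩ := hS
  rw [Filter.mem_prod_iff] at hBC
  obtain ⟨B, hB, Cs, hC, hsub2⟩ := hBC
  obtain ⟨W₁, hW₁, hW₁sub⟩ := DerTopAux.pi_mem τ (x := (0:K)) (s := A) hA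
  obtain ⟨W₂, hW₂, hW₂sub⟩ := DerTopAux.pi_mem τ (x := (0:K)) (s := B) hB
  refine ⟨W₁, hW₁, W₂, hW₂, Cs, hC, fun a b β ha hb hβ => ?_⟩
  have hmem2 : ((b, β) : (Fin (n+1) → K) × K) ∈ B ×ˢ Cs := Set.mk_mem_prod (hW₂sub b hb) hβ
  have : (a, b, β) ∈ A ×ˢ BC := Set.mk_mem_prod (hW₁sub a ha) (hsub2 hmem2)
  exact hsub this

end Auxiliary

open Topology Filter in
theorem stmt17 [Field K] [CharZero K] (τ : TopologicalSpace K)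
    (hτ : IsGtHenselian τ) (d : Derivation ℤ K K) (hd : d ≠ 0)
    (hdense : @Dense K τ {a : K | d a = 0}) :
    IsGtHenselian (derTop τ {d}) ∧ derTop τ {d} < τ := by
  classical
  obtain ⟨⟨ht2, hr, hinv⟩, hbot, hhens⟩ := hτ
  letI := τ
  haveI := ht2
  haveI := hr
  rw [DerTopAux.derTop_eq]
  have hle : τ ⊓ TopologicalSpace.induced (⇑d) τ ≤ τ := inf_le_left
  have hd0 : d (0 : K) = 0 := map_zero d
  have hdneg1 : d (-1 : K) = 0 := by
    rw [map_neg, Derivation.map_one_eq_zero, neg_zero]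
  -- strict inequality
  have hne : τ ⊓ TopologicalSpace.induced (⇑d) τ ≠ τ := by
    intro heq
    have h5 : τ ≤ TopologicalSpace.induced (⇑d) τ :=
      le_trans (le_of_eq heq.symm) inf_le_right
    have hcd : Continuous (⇑d) := continuous_iff_le_induced.mpr h5
    have : ⇑d = fun _ => (0 : K) :=
      Continuous.ext_on hdense hcd continuous_const (fun x hx => hx)
    apply hd
    ext a
    exact congrFun this a
  -- σ is not discrete
  have hnebot : τ ⊓ TopologicalSpace.induced (⇑d) τ ≠ ⊥ := by
    intro hb
    have h0 : ({0} : Set K) ∈ @nhds K (τ ⊓ TopologicalSpace.induced (⇑d) τ) 0 := by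
      rw [hb]
      have hdisc : @DiscreteTopology K ⊥ := @DiscreteTopology.mk K ⊥ rfl
      have hpure : @nhds K ⊥ = pure := @nhds_discrete K ⊥ hdisc
      rw [hpure]
      exact Filter.mem_pure.mpr rfl
    rw [DerTopAux.nhds_sigma, hd0, Filter.mem_inf_iff] at h0
    obtain ⟨t₁, ht₁, t₂, ht₂, heq⟩ := h0
    rw [Filter.mem_comap] at ht₂
    obtain ⟨V, hV, hpre⟩ := ht₂
    have htV : t₁ ∩ V ∈ 𝓝 (0 : K) := Filter.inter_mem ht₁ hV
    rw [mem_nhds_iff] at htV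
    obtain ⟨O, hOsub, hOopen, hO0⟩ := htV
    have hOne : O ≠ {0} := by
      intro h
      apply hbot
      apply eq_bot_of_singletons_open
      intro x
      have h1 : IsOpen ({0} : Set K) := h ▸ hOopen
      have h2 : IsOpen ((fun y : K => y - x) ⁻¹' {0}) :=
        h1.preimage (continuous_id.sub continuous_const)
      convert h2 using 1
      ext y
      simp [sub_eq_zero, eq_comm]
    have hss : ({0} : Set K) ⊂ O := (Set.singleton_subset_iff.mpr hO0).ssubset_of_ne
      (Ne.symm hOne)
    obtain ⟨y, hyO, hy0⟩ := Set.exists_of_ssubset hss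
    have hopen : IsOpen (O ∩ {0}ᶜ) := hOopen.inter isOpen_compl_singleton
    obtain ⟨c, hcK, hcO⟩ := hdense.exists_mem_open hopen ⟨y, hyO, hy0⟩
    have hc0 : d c = 0 := hcK
    have hcV : d c ∈ V := by rw [hc0]; exact mem_of_mem_nhds hV
    have hct : c ∈ t₁ ∩ t₂ := ⟨(hOsub hcO.1).1, hpre hcV⟩
    rw [← heq] at hct
    exact hcO.2 hct
  refine ⟨⟨⟨t2Space_antitone hle ht2, DerTopAux.ring_sigma τ hr d,
    DerTopAux.inv_sigma τ hr hinv d⟩, hnebot, ?_⟩, lt_iff_le_and_ne.mpr ⟨hle, hne⟩⟩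
  -- the gt-henselian condition
  intro U hU n
  rw [DerTopAux.nhds_sigma, hdneg1, Filter.mem_inf_iff] at hU
  obtain ⟨U₁, hU₁, t₂, ht₂, hUeq⟩ := hU
  rw [Filter.mem_comap] at ht₂
  obtain ⟨U₂, hU₂, hpre⟩ := ht₂
  obtain ⟨W₁, hW₁, W₂, hW₂, W₃, hW₃, hGmem⟩ := DerTopAux.extract τ ht2 hr hinv n hU₂
  have hW₃' : W₃ ∩ U₁ ∈ 𝓝 (-1 : K) := Filter.inter_mem hW₃ hU₁
  obtain ⟨V', hV', hroot⟩ := hhens (W₃ ∩ U₁) hW₃' n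
  refine ⟨(V' ∩ W₁) ∩ (⇑d) ⁻¹' W₂, ?_, ?_⟩
  · rw [DerTopAux.nhds_sigma, hd0]
    exact Filter.inter_mem (Filter.mem_inf_of_left (Filter.inter_mem hV' hW₁))
      (Filter.mem_inf_of_right (Filter.preimage_mem_comap hW₂))
  · intro a ha
    obtain ⟨β, hβ, hroot0, hder⟩ := hroot a (fun i => (ha i).1.1)
    have hroot0' : (DerTopAux.P n a).eval β = 0 := hroot0
    have hder' : (derivative (DerTopAux.P n a)).eval β ≠ 0 := hder
    have hdβ : d β = (-(∑ i : Fin (n+1), β ^ (i:ℕ) * d (a i))) *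
        ((derivative (DerTopAux.P n a)).eval β)⁻¹ :=
      (eq_mul_inv_iff_mul_eq₀ hder').mpr (DerTopAux.comp3 n d a β hroot0')
    have hdβU₂ : d β ∈ U₂ := by
      rw [hdβ]
      exact hGmem a (fun i => d (a i)) β (fun i => (ha i).1.2) (fun i => (ha i).2) hβ.1
    refine ⟨β, ?_, hroot0, hder⟩
    rw [hUeq]
    exact ⟨hβ.2, hpre hdβU₂⟩
end
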